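/- Let ρ, ρ̂ ∈ (0,1), γ > 1, Ĉ > 0, let L̂ be slowly varying at 0⁺, and let ψ̂ : (0,∞) → (0,∞) be nondecreasing with ψ̂(x)/(Ĉ x^{ρ̂} L̂(x)) → 1 as x → 0⁺ (set ψ̂(0) := 0). Let μ denote the Dynkin–Lamperti generalized arcsine law of index ρ on (0,∞), i.e. the probability measure μ(dy) = (sin(ρπ)/π) · y^{−ρ}(1+y)^{−1} dy. Let (μ_t)_{t>0} be a family of Borel probability measures on [0,∞) converging weakly to μ as t → 0⁺. Then lim_{t→0⁺} (1/(Ĉ t^{ρ̂} L̂(t))) ∫_{[0, γ−1)} ψ̂( t (γ−1−y) ) μ_t(dy) = ∫_{[0, γ−1)} (γ−1−y)^{ρ̂} μ(dy). -/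

import Mathlib

open Filter Topology MeasureTheory Set

/-- A function `L : (0,∞) → (0,∞)` is slowly varying at `0⁺` if for every `l > 0`,
`L(l·x)/L(x) → 1` as `x → 0⁺`. -/
def SlowlyVaryingAtZero (L : ℝ → ℝ) : Prop :=
  ∀ l : ℝ, 0 < l → Tendsto (fun x : ℝ => L (l * x) / L x) (𝓝[>] 0) (𝓝 1)

private lemma aux_rpow_add_le {x y p : ℝ} (hx : 0 ≤ x) (hy : 0 ≤ y) (hp : 0 ≤ p)
    (hp1 : p ≤ 1) : (x + y) ^ p ≤ x ^ p + y ^ p := by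
  have h := NNReal.rpow_add_le_add_rpow (x.toNNReal) (y.toNNReal) hp hp1
  have h2 := NNReal.coe_le_coe.2 h
  simp only [NNReal.coe_add, NNReal.coe_rpow, Real.coe_toNNReal _ hx,
    Real.coe_toNNReal _ hy] at h2
  exact h2

/-- If `0 ≤ x ≤ y`, `0 ≤ p ≤ 1` then `y^p ≤ x^p + (y-x)^p`. -/
private lemma aux_rpow_sub_le {x y p : ℝ} (hx : 0 ≤ x) (hxy : x ≤ y) (hp : 0 ≤ p)
    (hp1 : p ≤ 1) : y ^ p ≤ x ^ p + (y - x) ^ p := by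
  have := aux_rpow_add_le hx (sub_nonneg.2 hxy) hp hp1
  simpa using this

set_option maxHeartbeats 1000000 in
/-- analytic core of Lemma 4.2 of the paper. Let `ψ̂` be nondecreasing,
regularly varying at `0⁺` with index `ρ̂` (`ψ̂(x) ∼ Ĉ x^ρ̂ L̂(x)`), let `μ` be the
Dynkin–Lamperti generalized arcsine law of index `ρ`, i.e.
`μ(dy) = (sin(ρπ)/π) y^{−ρ}(1+y)^{−1} dy` on `(0,∞)`, and let `(μ_t)` be Borel
probability measures on `[0,∞)` converging weakly to `μ` as `t → 0⁺`. Then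
`(1/(Ĉ t^ρ̂ L̂(t))) ∫_{[0,γ−1)} ψ̂(t(γ−1−y)) μ_t(dy) → ∫_{[0,γ−1)} (γ−1−y)^ρ̂ μ(dy)`. -/
theorem dynkin_lamperti_energy_limit
    (rho rhoh : ℝ) (hrho : rho ∈ Set.Ioo (0:ℝ) 1) (hrhoh : rhoh ∈ Set.Ioo (0:ℝ) 1)
    (gamma : ℝ) (hgamma : 1 < gamma)
    (Ch : ℝ) (hCh : 0 < Ch)
    (Lh : ℝ → ℝ) (hLhpos : ∀ x : ℝ, 0 < x → 0 < Lh x)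
    (hLhsv : SlowlyVaryingAtZero Lh)
    (psih : ℝ → ℝ)
    (hpsih0 : psih 0 = 0)
    (hpsihpos : ∀ x : ℝ, 0 < x → 0 < psih x)
    (hpsihmono : MonotoneOn psih (Set.Ici (0:ℝ)))
    (hpsih : Tendsto (fun x : ℝ => psih x / (Ch * x ^ rhoh * Lh x)) (𝓝[>] 0) (𝓝 1))
    (ν : Measure ℝ)
    (hν : ν = (MeasureTheory.volume.restrict (Set.Ioi (0:ℝ))).withDensity
      (fun y : ℝ => ENNReal.ofReal
        ((Real.sin (rho * Real.pi) / Real.pi) * (y ^ (-rho) * (1 + y)⁻¹))))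
    (μ : ℝ → Measure ℝ)
    (hμprob : ∀ t : ℝ, 0 < t → IsProbabilityMeasure (μ t))
    (hμ0 : ∀ t : ℝ, 0 < t → μ t (Set.Iio 0) = 0)
    (hweak : ∀ f : BoundedContinuousFunction ℝ ℝ,
      Tendsto (fun t : ℝ => ∫ y, f y ∂(μ t)) (𝓝[>] 0) (𝓝 (∫ y, f y ∂ν))) :
    Tendsto
      (fun t : ℝ =>
        (1 / (Ch * t ^ rhoh * Lh t)) *
          ∫ y in Set.Ico 0 (gamma - 1), psih (t * (gamma - 1 - y)) ∂(μ t))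
      (𝓝[>] 0)
      (𝓝 (∫ y in Set.Ico 0 (gamma - 1), (gamma - 1 - y) ^ rhoh ∂ν)) := by
  obtain ⟨hr0, hr1⟩ := hrhoh
  set a : ℝ := gamma - 1 with ha
  have ha0 : 0 < a := by simp only [ha]; linarith
  set R : ℝ → ℝ := fun t => Ch * t ^ rhoh * Lh t with hR
  have hRpos : ∀ t : ℝ, 0 < t → 0 < R t := fun t ht =>
    mul_pos (mul_pos hCh (Real.rpow_pos_of_pos ht _)) (hLhpos t ht)
  set ψ : ℝ → ℝ := fun x => psih (max x 0) with hψ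
  have hψmono : Monotone ψ := fun x y hxy =>
    hpsihmono (le_max_right x 0) (le_max_right y 0) (max_le_max hxy le_rfl)
  have hψeq : ∀ x : ℝ, 0 ≤ x → ψ x = psih x := fun x hx => by
    simp only [hψ, max_eq_left hx]
  have hψnonneg : ∀ x : ℝ, 0 ≤ ψ x := by
    intro x
    rcases lt_or_eq_of_le (le_max_right x 0) with h | h
    · exact (hpsihpos _ h).le
    · simp only [hψ, ← h, hpsih0, le_refl]
  have hψmeas : Measurable ψ := hψmono.measurable
  -- Lemma A: pointwise ratio limit
  have hA : ∀ c : ℝ, 0 < c →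
      Tendsto (fun t : ℝ => ψ (t * c) / R t) (𝓝[>] 0) (𝓝 (c ^ rhoh)) := by
    intro c hc
    have hmapc : Tendsto (fun t : ℝ => t * c) (𝓝[>] 0) (𝓝[>] 0) := by
      rw [tendsto_nhdsWithin_iff]
      constructor
      · have : Tendsto (fun t : ℝ => t * c) (𝓝 0) (𝓝 (0 * c)) :=
          (continuous_id.mul continuous_const).tendsto 0
        rw [zero_mul] at this
        exact this.mono_left nhdsWithin_le_nhds
      · exact eventually_mem_nhdsWithin.mono fun t ht => mul_pos ht hc
    have h1 : Tendsto (fun t : ℝ => ψ (t * c) / R (t * c)) (𝓝[>] 0) (𝓝 1) := by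
      refine (hpsih.comp hmapc).congr' ?_
      filter_upwards [eventually_mem_nhdsWithin] with t ht
      simp only [Function.comp_apply, hR]
      rw [hψeq _ (mul_pos ht hc).le]
    have h2 : Tendsto (fun t : ℝ => R (t * c) / R t) (𝓝[>] 0) (𝓝 (c ^ rhoh)) := by
      have h3 := hLhsv c hc
      have heq : (fun t : ℝ => c ^ rhoh * (Lh (c * t) / Lh t)) =ᶠ[𝓝[>] (0:ℝ)]
          (fun t : ℝ => R (t * c) / R t) := by
        filter_upwards [eventually_mem_nhdsWithin] with t ht
        have ht0 : (0:ℝ) < t := ht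
        simp only [hR]
        rw [Real.mul_rpow ht0.le hc.le, mul_comm t c]
        have h4 : (t:ℝ) ^ rhoh ≠ 0 := (Real.rpow_pos_of_pos ht0 _).ne'
        have h5 : Lh t ≠ 0 := (hLhpos t ht0).ne'
        field_simp
      have h6 := (tendsto_const_nhds (x := c ^ rhoh) (f := 𝓝[>] (0:ℝ))).mul h3
      rw [mul_one] at h6
      exact h6.congr' heq
    have heq2 : (fun t : ℝ => ψ (t * c) / R (t * c) * (R (t * c) / R t)) =ᶠ[𝓝[>] (0:ℝ)]
        (fun t : ℝ => ψ (t * c) / R t) := by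
      filter_upwards [eventually_mem_nhdsWithin] with t ht
      have ht0 : (0:ℝ) < t := ht
      have h4 : R (t * c) ≠ 0 := (hRpos _ (mul_pos ht0 hc)).ne'
      have h5 : R t ≠ 0 := (hRpos t ht0).ne'
      field_simp
    have h7 := h1.mul h2
    rw [one_mul] at h7
    exact h7.congr' heq2
  -- ν facts
  have hνIio : ν (Set.Iio (0:ℝ)) = 0 := by
    rw [hν, withDensity_apply _ measurableSet_Iio,
      Measure.restrict_restrict measurableSet_Iio]
    have h0 : Set.Iio (0:ℝ) ∩ Set.Ioi 0 = ∅ := by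
      ext x
      simp only [Set.mem_inter_iff, Set.mem_Iio, Set.mem_Ioi, Set.mem_empty_iff_false,
        iff_false, not_and]
      intro h1 h2; linarith
    rw [h0, Measure.restrict_empty, lintegral_zero_measure]
  have hνfin : IsFiniteMeasure ν := by
    refine ⟨?_⟩
    by_contra h
    push_neg at h
    have htop : ν Set.univ = ⊤ := top_le_iff.mp h
    have h1 := hweak 1
    have h2 : (fun t : ℝ => ∫ y, (1 : BoundedContinuousFunction ℝ ℝ) y ∂(μ t))
        =ᶠ[𝓝[>] (0:ℝ)] (fun _ => (1:ℝ)) := by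
      filter_upwards [eventually_mem_nhdsWithin] with t ht
      haveI := hμprob t ht
      simp
    have h3 : Tendsto (fun _ : ℝ => (1:ℝ)) (𝓝[>] (0:ℝ))
        (𝓝 (∫ y, (1 : BoundedContinuousFunction ℝ ℝ) y ∂ν)) := h1.congr' h2
    have h4 : ∫ y, (1 : BoundedContinuousFunction ℝ ℝ) y ∂ν = 0 := by
      simp [integral_const, Measure.real, htop]
    rw [h4] at h3
    have h5 := tendsto_nhds_unique h3 tendsto_const_nhds
    norm_num at h5
  haveI := hνfin
  -- the bounded continuous function G
  have hGbase : Continuous (fun y : ℝ => a - min (max y 0) a) :=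
    continuous_const.sub ((continuous_id.max continuous_const).min continuous_const)
  have hGcont : Continuous (fun y : ℝ => (a - min (max y 0) a) ^ rhoh) :=
    (Real.continuous_rpow_const hr0.le).comp hGbase
  have hGbase_nonneg : ∀ y : ℝ, 0 ≤ a - min (max y 0) a := fun y =>
    sub_nonneg.2 (min_le_right _ _)
  have hGbase_le : ∀ y : ℝ, a - min (max y 0) a ≤ a := fun y => by
    have h := le_min (le_max_right y 0) ha0.le
    linarith
  have hGbd : ∀ y : ℝ, ‖(a - min (max y 0) a) ^ rhoh‖ ≤ a ^ rhoh := by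
    intro y
    rw [Real.norm_eq_abs, abs_of_nonneg (Real.rpow_nonneg (hGbase_nonneg y) _)]
    exact Real.rpow_le_rpow (hGbase_nonneg y) (hGbase_le y) hr0.le
  set G : BoundedContinuousFunction ℝ ℝ :=
    BoundedContinuousFunction.ofNormedAddCommGroup _ hGcont (a ^ rhoh) hGbd with hG
  have hGapp : ∀ y : ℝ, G y = (a - min (max y 0) a) ^ rhoh := fun y => rfl
  -- key rewriting lemma
  have key : ∀ m : Measure ℝ, IsFiniteMeasure m → m (Set.Iio 0) = 0 →
      ∫ y, G y ∂m = ∫ y in Set.Ico 0 a, (a - y) ^ rhoh ∂m := by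
    intro m hfin hm0
    haveI := hfin
    have hGint : Integrable (fun y => G y) m := G.integrable m
    have hcompl0 : ∫ y in (Set.Ici (0:ℝ))ᶜ, G y ∂m = 0 := by
      have hz : m.restrict (Set.Ici (0:ℝ))ᶜ = 0 := by
        rw [Measure.restrict_eq_zero, compl_Ici]
        exact hm0
      rw [hz, integral_zero_measure]
    have step1 : ∫ y, G y ∂m = ∫ y in Set.Ici 0, G y ∂m := by
      rw [← integral_add_compl measurableSet_Ici hGint, hcompl0, add_zero]
    have hunion : Set.Ico (0:ℝ) a ∪ Set.Ici a = Set.Ici 0 := Set.Ico_union_Ici_eq_Ici ha0.le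
    have step2 : ∫ y in Set.Ici (0:ℝ), G y ∂m
        = (∫ y in Set.Ico 0 a, G y ∂m) + ∫ y in Set.Ici a, G y ∂m := by
      rw [← hunion]
      have hdisj : Disjoint (Set.Ico (0:ℝ) a) (Set.Ici a) :=
        Set.disjoint_left.mpr fun y hy1 hy2 => absurd hy1.2 (not_lt.mpr hy2)
      exact setIntegral_union hdisj measurableSet_Ici
        hGint.integrableOn hGint.integrableOn
    have step3 : ∫ y in Set.Ici a, G y ∂m = 0 := by
      have hz : ∀ y ∈ Set.Ici a, G y = 0 := by
        intro y hy
        have hy0 : (0:ℝ) ≤ y := ha0.le.trans hy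
        rw [hGapp, max_eq_left hy0, min_eq_right hy, sub_self, Real.zero_rpow hr0.ne']
      rw [setIntegral_congr_fun measurableSet_Ici hz, integral_zero]
    have step4 : ∫ y in Set.Ico (0:ℝ) a, G y ∂m = ∫ y in Set.Ico 0 a, (a - y) ^ rhoh ∂m := by
      refine setIntegral_congr_fun measurableSet_Ico ?_
      intro y hy
      rw [hGapp, max_eq_left hy.1, min_eq_left hy.2.le]
    rw [step1, step2, step3, add_zero, step4]
  -- convergence of J
  have hJ : Tendsto (fun t : ℝ => ∫ y in Set.Ico 0 a, (a - y) ^ rhoh ∂(μ t)) (𝓝[>] (0:ℝ))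
      (𝓝 (∫ y in Set.Ico 0 a, (a - y) ^ rhoh ∂ν)) := by
    have hw := hweak G
    rw [key ν hνfin hνIio] at hw
    refine hw.congr' ?_
    filter_upwards [eventually_mem_nhdsWithin] with t ht
    haveI := hμprob t ht
    exact key (μ t) inferInstance (hμ0 t ht)
  -- measurability of the limit integrand
  have hgmeas : Measurable (fun y : ℝ => (a - y) ^ rhoh) :=
    (Real.continuous_rpow_const hr0.le).measurable.comp (measurable_const.sub measurable_id)
  -- the difference tends to 0
  have hdiff : Tendsto (fun t : ℝ =>
      (∫ y in Set.Ico 0 a, ψ (t * (a - y)) / R t ∂(μ t))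
        - ∫ y in Set.Ico 0 a, (a - y) ^ rhoh ∂(μ t)) (𝓝[>] (0:ℝ)) (𝓝 0) := by
    rw [Metric.tendsto_nhds]
    intro ε hε
    set δ : ℝ := min a ((ε/8) ^ (rhoh⁻¹)) with hδdef
    have hδ0 : 0 < δ := lt_min ha0 (Real.rpow_pos_of_pos (by linarith) _)
    have hδρ : δ ^ rhoh ≤ ε/8 := by
      have h1 : δ ≤ (ε/8) ^ (rhoh⁻¹) := min_le_right _ _
      have h2 : δ ^ rhoh ≤ ((ε/8) ^ (rhoh⁻¹)) ^ rhoh := Real.rpow_le_rpow hδ0.le h1 hr0.le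
      rwa [Real.rpow_inv_rpow (by linarith) hr0.ne'] at h2
    set n : ℕ := ⌊a / δ⌋₊ with hn
    have hEj : ∀ j ∈ Finset.Icc 1 (n+1), ∀ᶠ t in 𝓝[>] (0:ℝ),
        |ψ (t * ((j:ℝ) * δ)) / R t - ((j:ℝ) * δ) ^ rhoh| ≤ ε/8 := by
      intro j hj
      have hj1 : 1 ≤ j := (Finset.mem_Icc.mp hj).1
      have hjpos : 0 < (j:ℝ) * δ := by
        have hj1' : (1:ℝ) ≤ (j:ℝ) := by exact_mod_cast hj1
        nlinarith
      have hev := Metric.tendsto_nhds.mp (hA _ hjpos) (ε/8) (by linarith)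
      filter_upwards [hev] with t ht
      rw [Real.dist_eq] at ht
      exact ht.le
    have hE := (Filter.eventually_all_finset (Finset.Icc 1 (n+1))).mpr hEj
    filter_upwards [hE, eventually_mem_nhdsWithin] with t hEt ht
    have ht0 : (0:ℝ) < t := ht
    haveI := hμprob t ht0
    have hRt := hRpos t ht0
    -- pointwise bound
    have hpt : ∀ y ∈ Set.Ico (0:ℝ) a,
        |ψ (t * (a - y)) / R t - (a - y) ^ rhoh| ≤ ε/2 := by
      intro y hy
      set c : ℝ := a - y with hc
      have hc0 : 0 < c := by simp only [hc]; linarith [hy.2]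
      have hca : c ≤ a := by simp only [hc]; linarith [hy.1]
      have h1mem : (1:ℕ) ∈ Finset.Icc 1 (n+1) := Finset.mem_Icc.mpr ⟨le_refl _, by omega⟩
      have hδbd := hEt 1 h1mem
      rw [Nat.cast_one, one_mul] at hδbd
      obtain ⟨hδbd1, hδbd2⟩ := abs_le.mp hδbd
      by_cases hcδ : c ≤ δ
      · -- tail case
        have hfnn : 0 ≤ ψ (t * c) / R t := div_nonneg (hψnonneg _) hRt.le
        have hmono : ψ (t * c) ≤ ψ (t * δ) :=
          hψmono (mul_le_mul_of_nonneg_left hcδ ht0.le)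
        have hfu : ψ (t * c) / R t ≤ ψ (t * δ) / R t := by gcongr
        have hgnn : 0 ≤ c ^ rhoh := Real.rpow_nonneg hc0.le _
        have hgu : c ^ rhoh ≤ δ ^ rhoh := Real.rpow_le_rpow hc0.le hcδ hr0.le
        rw [abs_le]
        constructor <;> linarith
      · -- main case
        push_neg at hcδ
        set i : ℕ := ⌊c / δ⌋₊ with hi
        have hcd0 : (0:ℝ) ≤ c / δ := div_nonneg hc0.le hδ0.le
        have hi1 : 1 ≤ i := by
          rw [hi]
          refine Nat.le_floor ?_
          rw [Nat.cast_one, le_div_iff₀ hδ0, one_mul]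
          exact hcδ.le
        have hin : i ≤ n := by
          rw [hi, hn]
          exact Nat.floor_mono (by gcongr)
        have hfl : (i:ℝ) * δ ≤ c := by
          have h1 : (i:ℝ) ≤ c / δ := Nat.floor_le hcd0
          calc (i:ℝ) * δ ≤ (c / δ) * δ := by gcongr
            _ = c := div_mul_cancel₀ _ hδ0.ne'
        have hcu : c ≤ ((i:ℝ) + 1) * δ := by
          have h1 : c / δ ≤ (i:ℝ) + 1 := (Nat.lt_floor_add_one (c / δ)).le
          calc c = (c / δ) * δ := (div_mul_cancel₀ _ hδ0.ne').symm
            _ ≤ ((i:ℝ) + 1) * δ := by gcongr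
        have hilo : 0 < (i:ℝ) * δ := by
          have : (1:ℝ) ≤ (i:ℝ) := by exact_mod_cast hi1
          nlinarith
        have hiIcc : i ∈ Finset.Icc 1 (n+1) := Finset.mem_Icc.mpr ⟨hi1, by omega⟩
        have hi1Icc : i + 1 ∈ Finset.Icc 1 (n+1) := Finset.mem_Icc.mpr ⟨by omega, by omega⟩
        have hlow := hEt i hiIcc
        have hup := hEt (i+1) hi1Icc
        push_cast at hup
        obtain ⟨hlow1, hlow2⟩ := abs_le.mp hlow
        obtain ⟨hup1, hup2⟩ := abs_le.mp hup
        have hmono1 : ψ (t * ((i:ℝ) * δ)) ≤ ψ (t * c) :=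
          hψmono (mul_le_mul_of_nonneg_left hfl ht0.le)
        have hmono2 : ψ (t * c) ≤ ψ (t * (((i:ℝ) + 1) * δ)) :=
          hψmono (mul_le_mul_of_nonneg_left hcu ht0.le)
        have hdiv1 : ψ (t * ((i:ℝ) * δ)) / R t ≤ ψ (t * c) / R t := by gcongr
        have hdiv2 : ψ (t * c) / R t ≤ ψ (t * (((i:ℝ) + 1) * δ)) / R t := by gcongr
        -- rpow moduli
        have hsub1 : (((i:ℝ) + 1) * δ) ^ rhoh ≤ c ^ rhoh + δ ^ rhoh := by
          have h1 : (((i:ℝ) + 1) * δ) ^ rhoh ≤ c ^ rhoh + (((i:ℝ) + 1) * δ - c) ^ rhoh :=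
            aux_rpow_sub_le hc0.le hcu hr0.le hr1.le
          have h2 : (((i:ℝ) + 1) * δ - c) ^ rhoh ≤ δ ^ rhoh := by
            refine Real.rpow_le_rpow (by linarith) (by linarith) hr0.le
          linarith
        have hsub2 : c ^ rhoh ≤ ((i:ℝ) * δ) ^ rhoh + δ ^ rhoh := by
          have h1 : c ^ rhoh ≤ ((i:ℝ) * δ) ^ rhoh + (c - (i:ℝ) * δ) ^ rhoh :=
            aux_rpow_sub_le hilo.le hfl hr0.le hr1.le
          have h2 : (c - (i:ℝ) * δ) ^ rhoh ≤ δ ^ rhoh := by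
            refine Real.rpow_le_rpow (by linarith) (by linarith) hr0.le
          linarith
        rw [abs_le]
        constructor
        · linarith
        · linarith
    -- integrability
    have hint1 : IntegrableOn (fun y : ℝ => ψ (t * (a - y)) / R t) (Set.Ico 0 a) (μ t) := by
      constructor
      · exact ((hψmeas.comp ((measurable_const.sub measurable_id).const_mul t)).div_const
          _).aestronglyMeasurable
      · refine HasFiniteIntegral.of_bounded (C := ψ (t * a) / R t) ?_
        refine (ae_restrict_iff' measurableSet_Ico).2 (ae_of_all _ ?_)
        intro y hy
        rw [Real.norm_eq_abs, abs_of_nonneg (div_nonneg (hψnonneg _) hRt.le)]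
        have hm : ψ (t * (a - y)) ≤ ψ (t * a) :=
          hψmono (mul_le_mul_of_nonneg_left (by linarith [hy.1]) ht0.le)
        gcongr
    have hint2 : IntegrableOn (fun y : ℝ => (a - y) ^ rhoh) (Set.Ico 0 a) (μ t) := by
      constructor
      · exact hgmeas.aestronglyMeasurable
      · refine HasFiniteIntegral.of_bounded (C := a ^ rhoh) ?_
        refine (ae_restrict_iff' measurableSet_Ico).2 (ae_of_all _ ?_)
        intro y hy
        rw [Real.norm_eq_abs, abs_of_nonneg (Real.rpow_nonneg (by linarith [hy.2]) _)]
        exact Real.rpow_le_rpow (by linarith [hy.2]) (by linarith [hy.1]) hr0.le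
    rw [Real.dist_eq, sub_zero, ← integral_sub hint1 hint2]
    have hbd : ‖∫ y in Set.Ico (0:ℝ) a,
        (ψ (t * (a - y)) / R t - (a - y) ^ rhoh) ∂(μ t)‖
        ≤ (ε/2) * ((μ t) (Set.Ico 0 a)).toReal := by
      refine norm_setIntegral_le_of_norm_le_const (measure_lt_top _ _) ?_
      intro y hy
      rw [Real.norm_eq_abs]
      exact hpt y hy
    rw [Real.norm_eq_abs] at hbd
    have htr : ((μ t) (Set.Ico 0 a)).toReal ≤ 1 := by
      have h1 : (μ t) (Set.Ico 0 a) ≤ 1 := prob_le_one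
      simpa using ENNReal.toReal_mono ENNReal.one_ne_top h1
    have htrnn : 0 ≤ ((μ t) (Set.Ico 0 a)).toReal := ENNReal.toReal_nonneg
    calc |∫ y in Set.Ico (0:ℝ) a, (ψ (t * (a - y)) / R t - (a - y) ^ rhoh) ∂(μ t)|
        ≤ (ε/2) * ((μ t) (Set.Ico 0 a)).toReal := hbd
      _ ≤ ε/2 := by nlinarith
      _ < ε := by linarith
  -- assembly
  have hmain : Tendsto (fun t : ℝ => ∫ y in Set.Ico 0 a, ψ (t * (a - y)) / R t ∂(μ t))
      (𝓝[>] (0:ℝ)) (𝓝 (∫ y in Set.Ico 0 a, (a - y) ^ rhoh ∂ν)) := by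
    have h1 := hdiff.add hJ
    rw [zero_add] at h1
    refine h1.congr fun t => ?_
    ring
  refine hmain.congr' ?_
  filter_upwards [eventually_mem_nhdsWithin] with t ht
  have ht0 : (0:ℝ) < t := ht
  have hRt := hRpos t ht0
  have hcongr : ∫ y in Set.Ico (0:ℝ) a, ψ (t * (a - y)) / R t ∂(μ t)
      = ∫ y in Set.Ico (0:ℝ) a, psih (t * (a - y)) / R t ∂(μ t) := by
    refine setIntegral_congr_fun measurableSet_Ico ?_
    intro y hy
    have h0 : (0:ℝ) ≤ t * (a - y) := mul_nonneg ht0.le (by linarith [hy.2])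
    show ψ (t * (a - y)) / R t = psih (t * (a - y)) / R t
    rw [hψeq _ h0]
  rw [hcongr, integral_div, one_div, div_eq_inv_mul]
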